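/- (Theorem 1.) Let 𝓗 ∈ (0,1), σ > 0, m > 0, and set ρ = 2^{2𝓗−1} − 1. Let U, V be independent standard Gaussian real random variables and set Z = σ·m^{𝓗}·V and Y = σ·m^{𝓗}·(ρ·V + √(1−ρ²)·U), so that (Y,Z) is a centered bivariate Gaussian vector with Var(Y) = Var(Z) = σ²m^{2𝓗} and Cov(Y,Z) = σ²m^{2𝓗}ρ, i.e. exactly the joint law of the consecutive increments (B^𝓗_{2m} − B^𝓗_m, B^𝓗_m − B^𝓗_0) of a fractional Brownian motion with Hurst exponent 𝓗 and volatility σ. Then the market information I²_m := 1 − H(1_{Y>0} | 1_{Z>0}) satisfies I²_m = 1 + f(1/2 − (1/π)·arctan(ρ/√(1−ρ²))) + f(1/2 + (1/π)·arctan(ρ/√(1−ρ²))). -/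

import Mathlib

open MeasureTheory ProbabilityTheory Real

/-- `f x = x log₂ x`, with the convention `f 0 = 0`
(automatic in Lean since `Real.logb 2 0 = 0`). -/
noncomputable def f (x : ℝ) : ℝ := x * Real.logb 2 x

/-- The conditional Shannon entropy (base 2) `H(1_A | 1_B)` of the indicator of the event `A`
given the indicator of the event `B`:
`H(X|W) = -∑_w P(W=w) ∑_x P(X=x|W=w) log₂ P(X=x|W=w)`, with conditional probabilities
written as ratios `P(X=x ∩ W=w)/P(W=w)`. -/
noncomputable def condEntropyInd {Ω : Type*} [MeasurableSpace Ω] (P : Measure Ω)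
    (A B : Set Ω) : ℝ :=
  -((P B).toReal *
      (f ((P (A ∩ B)).toReal / (P B).toReal) + f ((P (Aᶜ ∩ B)).toReal / (P B).toReal)) +
    (P Bᶜ).toReal *
      (f ((P (A ∩ Bᶜ)).toReal / (P Bᶜ).toReal) + f ((P (Aᶜ ∩ Bᶜ)).toReal / (P Bᶜ).toReal)))


lemma aux_radial (b : ℝ) (hb : 0 < b) :
    ∫ r in Set.Ioi (0:ℝ), r * rexp (-b * r ^ 2) = (2 * b)⁻¹ := by
  have hderiv : ∀ x ∈ Set.Ici (0:ℝ),
      HasDerivAt (fun r : ℝ => -(2*b)⁻¹ * rexp (-b * r ^ 2)) (x * rexp (-b * x ^ 2)) x := by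
    intro x _
    have h1 : HasDerivAt (fun r : ℝ => -b * r ^ 2) (-b * (2 * x)) x := by
      simpa using ((hasDerivAt_pow 2 x).const_mul (-b))
    have h2 := (h1.exp).const_mul (-(2*b)⁻¹)
    refine h2.congr_deriv ?_
    field_simp
  have hint : IntegrableOn (fun r : ℝ => r * rexp (-b * r ^ 2)) (Set.Ioi 0) :=
    (integrable_mul_exp_neg_mul_sq hb).integrableOn
  have htend : Filter.Tendsto (fun r : ℝ => -(2*b)⁻¹ * rexp (-b * r ^ 2))
      Filter.atTop (nhds 0) := by
    have h3 : Filter.Tendsto (fun r : ℝ => -b * r ^ 2) Filter.atTop Filter.atBot := by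
      apply Filter.Tendsto.const_mul_atTop_of_neg (neg_neg_iff_pos.mpr hb)
      exact Filter.tendsto_pow_atTop (by norm_num)
    have := (Real.tendsto_exp_atBot.comp h3).const_mul (-(2*b)⁻¹)
    simpa using this
  have := integral_Ioi_of_hasDerivAt_of_tendsto' hderiv hint htend
  simp only [neg_mul] at this ⊢
  rw [this]
  norm_num

lemma pdf2_polar (r θ : ℝ) :
    gaussianPDFReal 0 1 (r * Real.cos θ) * gaussianPDFReal 0 1 (r * Real.sin θ)
      = (2 * π)⁻¹ * rexp (-(1/2) * r ^ 2) := by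
  simp only [gaussianPDFReal, NNReal.coe_one, mul_one, sub_zero]
  have h : -(r * Real.cos θ) ^ 2 / 2 + -(r * Real.sin θ) ^ 2 / 2 = -(1/2) * r ^ 2 := by
    have := Real.sin_sq_add_cos_sq θ
    nlinarith [this]
  rw [mul_mul_mul_comm, ← Real.exp_add, h, ← mul_inv,
    Real.mul_self_sqrt (by positivity : (0:ℝ) ≤ 2*π)]

lemma gauss_prod_withDensity :
    (gaussianReal 0 1).prod (gaussianReal 0 1)
      = (volume.prod volume).withDensity
          (fun p : ℝ × ℝ => gaussianPDF 0 1 p.1 * gaussianPDF 0 1 p.2) := by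
  refine Measure.prod_eq fun s t hs ht => ?_
  rw [withDensity_apply _ (hs.prod ht), ← Measure.prod_restrict,
    lintegral_prod_mul (measurable_gaussianPDF 0 1).aemeasurable
      (measurable_gaussianPDF 0 1).aemeasurable,
    ← gaussianReal_apply 0 one_ne_zero s, ← gaussianReal_apply 0 one_ne_zero t]

lemma sector_measure (S : Set (ℝ × ℝ)) (hS : MeasurableSet S) (a b : ℝ)
    (hab : a ≤ b) (ha : -π ≤ a) (hb : b ≤ π)
    (hmem : ∀ r θ : ℝ, 0 < r → -π < θ → θ < π →
      ((r * Real.cos θ, r * Real.sin θ) ∈ S ↔ θ ∈ Set.Ioo a b)) :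
    ((gaussianReal 0 1).prod (gaussianReal 0 1)) S = ENNReal.ofReal ((b - a) / (2 * π)) := by
  have hπ : (0:ℝ) < π := Real.pi_pos
  set pdfR2 : ℝ × ℝ → ℝ := fun p => gaussianPDFReal 0 1 p.1 * gaussianPDFReal 0 1 p.2 with hpdfR2
  have hint : Integrable pdfR2 (volume.prod volume) :=
    (integrable_gaussianPDFReal 0 1).mul_prod (integrable_gaussianPDFReal 0 1)
  have h1 : ((gaussianReal 0 1).prod (gaussianReal 0 1)) S
      = ENNReal.ofReal (∫ p in S, pdfR2 p ∂(volume.prod volume)) := by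
    rw [gauss_prod_withDensity, withDensity_apply _ hS]
    have hpt : ∀ p : ℝ × ℝ, gaussianPDF 0 1 p.1 * gaussianPDF 0 1 p.2
        = ENNReal.ofReal (pdfR2 p) := by
      intro p
      rw [hpdfR2, ENNReal.ofReal_mul (gaussianPDFReal_nonneg 0 1 p.1)]
      rfl
    calc ∫⁻ p in S, gaussianPDF 0 1 p.1 * gaussianPDF 0 1 p.2 ∂(volume.prod volume)
        = ∫⁻ p in S, ENNReal.ofReal (pdfR2 p) ∂(volume.prod volume) :=
          lintegral_congr fun p => hpt p
      _ = ENNReal.ofReal (∫ p in S, pdfR2 p ∂(volume.prod volume)) :=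
          (ofReal_integral_eq_lintegral_ofReal hint.restrict
            (Filter.Eventually.of_forall fun p =>
              mul_nonneg (gaussianPDFReal_nonneg 0 1 p.1)
                (gaussianPDFReal_nonneg 0 1 p.2))).symm
  rw [h1]
  congr 1
  rw [← MeasureTheory.Measure.volume_eq_prod ℝ ℝ, ← integral_indicator hS, ← integral_comp_polarCoord_symm]
  have htarget : polarCoord.target = Set.Ioi (0:ℝ) ×ˢ Set.Ioo (-π) π := rfl
  have hsub : Set.Ioi (0:ℝ) ×ˢ Set.Ioo a b ⊆ polarCoord.target := by
    rw [htarget]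
    exact Set.prod_mono (le_refl _) (Set.Ioo_subset_Ioo ha hb)
  have hcongr : ∀ p ∈ polarCoord.target,
      p.1 • (S.indicator pdfR2) (polarCoord.symm p)
        = (Set.Ioi (0:ℝ) ×ˢ Set.Ioo a b).indicator
            (fun q : ℝ × ℝ => q.1 * ((2 * π)⁻¹ * rexp (-(1/2) * q.1 ^ 2))) p := by
    rintro ⟨r, θ⟩ hp
    rw [htarget] at hp
    obtain ⟨hr, hθ⟩ := hp
    have hr' : 0 < r := hr
    have hsymm : polarCoord.symm (r, θ) = (r * Real.cos θ, r * Real.sin θ) := rfl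
    rw [hsymm]
    by_cases hin : θ ∈ Set.Ioo a b
    · rw [Set.indicator_of_mem ((hmem r θ hr' hθ.1 hθ.2).mpr hin),
        Set.indicator_of_mem (by exact ⟨hr, hin⟩)]
      simp only [hpdfR2, smul_eq_mul]
      rw [pdf2_polar]
    · rw [Set.indicator_of_notMem (fun hc => hin ((hmem r θ hr' hθ.1 hθ.2).mp hc)),
        Set.indicator_of_notMem (fun hc => hin hc.2)]
      simp
  rw [setIntegral_congr_fun (by exact measurableSet_Ioi.prod measurableSet_Ioo) hcongr,
    setIntegral_indicator (by exact measurableSet_Ioi.prod measurableSet_Ioo),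
    Set.inter_eq_right.mpr hsub, MeasureTheory.Measure.volume_eq_prod ℝ ℝ]
  have hsplit : ∫ x in Set.Ioi (0:ℝ) ×ˢ Set.Ioo a b,
      x.1 * ((2 * π)⁻¹ * rexp (-(1/2) * x.1 ^ 2)) ∂(volume.prod volume)
      = (∫ r in Set.Ioi (0:ℝ), r * ((2 * π)⁻¹ * rexp (-(1/2) * r ^ 2)))
        * ∫ _ in Set.Ioo a b, (1:ℝ) := by
    rw [← setIntegral_prod_mul (fun r : ℝ => r * ((2 * π)⁻¹ * rexp (-(1/2) * r ^ 2)))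
      (fun _ : ℝ => (1:ℝ))]
    refine setIntegral_congr_fun (measurableSet_Ioi.prod measurableSet_Ioo) fun x _ => ?_
    simp
  rw [hsplit]
  have h2 : ∫ r in Set.Ioi (0:ℝ), r * ((2 * π)⁻¹ * rexp (-(1/2) * r ^ 2)) = (2 * π)⁻¹ := by
    have : ∀ r : ℝ, r * ((2 * π)⁻¹ * rexp (-(1/2) * r ^ 2))
        = (2 * π)⁻¹ * (r * rexp (-(1/2) * r ^ 2)) := fun r => by ring
    simp_rw [this]
    rw [integral_const_mul, aux_radial (1/2) (by norm_num)]
    norm_num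
  rw [h2]
  simp only [integral_const, smul_eq_mul, mul_one]
  rw [measureReal_def, Measure.restrict_apply_univ, Real.volume_Ioo,
    ENNReal.toReal_ofReal (by linarith : (0:ℝ) ≤ b - a)]
  ring

lemma sin_pos_iff_aux {θ : ℝ} (h1 : -π < θ) (h2 : θ < π) : 0 < Real.sin θ ↔ 0 < θ := by
  constructor
  · intro h
    by_contra hc
    push_neg at hc
    linarith [Real.sin_nonpos_of_nonpos_of_neg_pi_le hc h1.le]
  · intro h
    exact Real.sin_pos_of_pos_of_lt_pi h h2

lemma cos_pos_iff_aux {α θ : ℝ} (hα1 : -(π/2) < α) (hα2 : α < π/2)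
    (hθ1 : -π < θ) (hθ2 : θ < π) :
    0 < Real.cos (θ - α) ↔ α - π/2 < θ ∧ θ < α + π/2 := by
  constructor
  · intro h
    constructor
    · by_contra hc
      push_neg at hc
      have h1 : Real.cos (θ - α) = Real.cos (α - θ) := by
        rw [← Real.cos_neg]; ring_nf
      have h2 : Real.cos (α - θ) ≤ 0 :=
        Real.cos_nonpos_of_pi_div_two_le_of_le (by linarith) (by linarith)
      linarith [h1 ▸ h]
    · by_contra hc
      push_neg at hc
      have h2 : Real.cos (θ - α) ≤ 0 :=
        Real.cos_nonpos_of_pi_div_two_le_of_le (by linarith) (by linarith)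
      linarith
  · rintro ⟨h1, h2⟩
    exact Real.cos_pos_of_mem_Ioo ⟨by linarith, by linarith⟩

/-- **Theorem 1.** The market information `I²_m = 1 - H(1_{Y>0} | 1_{Z>0})` of the pair of
consecutive increments `(Y, Z) = (B^𝓗_{2m} - B^𝓗_m, B^𝓗_m - B^𝓗_0)` of a fractional Brownian
motion with Hurst exponent `𝓗` and volatility `σ` — a centered Gaussian vector with
`Var Y = Var Z = σ² m^(2𝓗)` and correlation `ρ = 2^(2𝓗-1) - 1`, realized as
`Z = σ m^𝓗 V`, `Y = σ m^𝓗 (ρ V + √(1-ρ²) U)` with `U, V` independent standard Gaussians —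
equals `1 + f(1/2 - (1/π) arctan(ρ/√(1-ρ²))) + f(1/2 + (1/π) arctan(ρ/√(1-ρ²)))`. -/
theorem market_information_fbm
    {Ω : Type*} [MeasurableSpace Ω] (P : Measure Ω) [IsProbabilityMeasure P]
    (H σ m : ℝ) (hH : H ∈ Set.Ioo (0 : ℝ) 1) (hσ : 0 < σ) (hm : 0 < m)
    (ρ : ℝ) (hρ : ρ = (2 : ℝ) ^ (2 * H - 1) - 1)
    (U V : Ω → ℝ) (hUm : Measurable U) (hVm : Measurable V)
    (hU : P.map U = gaussianReal 0 1) (hV : P.map V = gaussianReal 0 1)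
    (hUV : IndepFun U V P)
    (Y Z : Ω → ℝ)
    (hY : Y = fun ω => σ * m ^ H * (ρ * V ω + Real.sqrt (1 - ρ ^ 2) * U ω))
    (hZ : Z = fun ω => σ * m ^ H * V ω) :
    1 - condEntropyInd P {ω | 0 < Y ω} {ω | 0 < Z ω}
      = 1 + f (1 / 2 - 1 / π * Real.arctan (ρ / Real.sqrt (1 - ρ ^ 2)))
          + f (1 / 2 + 1 / π * Real.arctan (ρ / Real.sqrt (1 - ρ ^ 2))) := by
  have hπ : (0:ℝ) < π := Real.pi_pos
  -- bounds on ρ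
  have hρ2 : ρ < 1 := by
    have h1 : (2:ℝ) ^ (2 * H - 1) < 2 ^ (1:ℝ) :=
      (Real.rpow_lt_rpow_left_iff (by norm_num)).mpr (by linarith [hH.2])
    rw [Real.rpow_one] at h1
    rw [hρ]
    linarith [h1]
  have hρ1 : -1 < ρ := by
    have h1 : (0:ℝ) < (2:ℝ) ^ (2 * H - 1) := Real.rpow_pos_of_pos (by norm_num) _
    rw [hρ]
    linarith [h1]
  have hρsq : 0 < 1 - ρ ^ 2 := by nlinarith
  set s : ℝ := Real.sqrt (1 - ρ ^ 2) with hsdef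
  have hs0 : 0 < s := Real.sqrt_pos.mpr hρsq
  have hs2 : s ^ 2 = 1 - ρ ^ 2 := Real.sq_sqrt hρsq.le
  set α : ℝ := Real.arcsin ρ with hαdef
  have hα1 : -(π/2) < α := Real.neg_pi_div_two_lt_arcsin.mpr hρ1
  have hα2 : α < π/2 := Real.arcsin_lt_pi_div_two.mpr hρ2
  have hsinα : Real.sin α = ρ := Real.sin_arcsin hρ1.le hρ2.le
  have hcosα : Real.cos α = s := Real.cos_arcsin ρ
  have hαt : Real.arctan (ρ / s) = α := (Real.arcsin_eq_arctan ⟨hρ1, hρ2⟩).symm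
  -- the two half planes
  set TA : Set (ℝ × ℝ) := {p | 0 < s * p.1 + ρ * p.2} with hTAdef
  set TB : Set (ℝ × ℝ) := {p | 0 < p.2} with hTBdef
  have hTA : MeasurableSet TA :=
    measurableSet_lt measurable_const
      ((measurable_fst.const_mul s).add (measurable_snd.const_mul ρ))
  have hTB : MeasurableSet TB := measurableSet_lt measurable_const measurable_snd
  -- membership criteria in polar coordinates
  have hmemB : ∀ r θ : ℝ, 0 < r → -π < θ → θ < π →
      ((r * Real.cos θ, r * Real.sin θ) ∈ TB ↔ θ ∈ Set.Ioo 0 π) := by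
    intro r θ hr h1 h2
    simp only [hTBdef, Set.mem_setOf_eq, Set.mem_Ioo]
    rw [mul_pos_iff_of_pos_left hr, sin_pos_iff_aux h1 h2]
    exact ⟨fun h => ⟨h, h2⟩, fun h => h.1⟩
  have hkey : ∀ r θ : ℝ, 0 < r → ((r * Real.cos θ, r * Real.sin θ) ∈ TA ↔
      0 < Real.cos (θ - α)) := by
    intro r θ hr
    simp only [hTAdef, Set.mem_setOf_eq]
    have h1 : s * (r * Real.cos θ) + ρ * (r * Real.sin θ) = r * Real.cos (θ - α) := by
      rw [Real.cos_sub, hsinα, hcosα]; ring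
    rw [h1, mul_pos_iff_of_pos_left hr]
  have hmemA : ∀ r θ : ℝ, 0 < r → -π < θ → θ < π →
      ((r * Real.cos θ, r * Real.sin θ) ∈ TA ↔ θ ∈ Set.Ioo (α - π/2) (α + π/2)) := by
    intro r θ hr h1 h2
    rw [hkey r θ hr, cos_pos_iff_aux hα1 hα2 h1 h2]
    rfl
  have hmemAB : ∀ r θ : ℝ, 0 < r → -π < θ → θ < π →
      ((r * Real.cos θ, r * Real.sin θ) ∈ TA ∩ TB ↔ θ ∈ Set.Ioo 0 (α + π/2)) := by
    intro r θ hr h1 h2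
    rw [Set.mem_inter_iff, hmemA r θ hr h1 h2, hmemB r θ hr h1 h2]
    simp only [Set.mem_Ioo]
    constructor
    · rintro ⟨⟨_, h3⟩, h4, _⟩
      exact ⟨h4, h3⟩
    · rintro ⟨h3, h4⟩
      exact ⟨⟨by linarith, h4⟩, h3, by linarith⟩
  -- the three sector measures
  set μ2 : Measure (ℝ × ℝ) := (gaussianReal 0 1).prod (gaussianReal 0 1) with hμ2def
  have hμA : μ2 TA = ENNReal.ofReal (1/2) := by
    rw [hμ2def, sector_measure TA hTA (α - π/2) (α + π/2) (by linarith) (by linarith)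
      (by linarith) hmemA]
    congr 1
    field_simp
    ring
  have hμB : μ2 TB = ENNReal.ofReal (1/2) := by
    rw [hμ2def, sector_measure TB hTB 0 π (by linarith) (by linarith) (by linarith) hmemB]
    congr 1
    field_simp
    ring
  set q : ℝ := 1/4 + α / (2*π) with hqdef
  have hq1 : 0 < q := by
    rw [hqdef]
    have : -(1/4 : ℝ) < α / (2*π) := by
      rw [lt_div_iff₀ (by positivity)]
      nlinarith
    linarith
  have hq2 : q < 1/2 := by
    rw [hqdef]
    have : α / (2*π) < 1/4 := by
      rw [div_lt_iff₀ (by positivity)]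
      nlinarith
    linarith
  have hμAB : μ2 (TA ∩ TB) = ENNReal.ofReal q := by
    rw [hμ2def, sector_measure (TA ∩ TB) (hTA.inter hTB) 0 (α + π/2) (by linarith)
      (by linarith) (by linarith) hmemAB]
    congr 1
    rw [hqdef]
    field_simp
    ring
  -- transfer to P via the joint law
  set W : Ω → ℝ × ℝ := fun ω => (U ω, V ω) with hWdef
  have hWm : Measurable W := hUm.prodMk hVm
  have hmap : P.map W = μ2 := by
    have h := (ProbabilityTheory.indepFun_iff_map_prod_eq_prod_map_map hUm.aemeasurable
      hVm.aemeasurable).mp hUV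
    rw [hμ2def, hWdef, h, hU, hV]
  set A : Set Ω := {ω | 0 < Y ω} with hAdef
  set B : Set Ω := {ω | 0 < Z ω} with hBdef
  have hc : 0 < σ * m ^ H := mul_pos hσ (Real.rpow_pos_of_pos hm H)
  have hAeq : A = W ⁻¹' TA := by
    ext ω
    simp only [hAdef, hY, Set.mem_setOf_eq, Set.mem_preimage, hWdef, hTAdef]
    rw [mul_pos_iff_of_pos_left hc]
    constructor <;> intro h <;> linarith
  have hBeq : B = W ⁻¹' TB := by
    ext ω
    simp only [hBdef, hZ, Set.mem_setOf_eq, Set.mem_preimage, hWdef, hTBdef]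
    rw [mul_pos_iff_of_pos_left hc]
  have hPA : P A = ENNReal.ofReal (1/2) := by
    rw [hAeq, ← Measure.map_apply hWm hTA, hmap, hμA]
  have hPB : P B = ENNReal.ofReal (1/2) := by
    rw [hBeq, ← Measure.map_apply hWm hTB, hmap, hμB]
  have hPAB : P (A ∩ B) = ENNReal.ofReal q := by
    rw [hAeq, hBeq, ← Set.preimage_inter, ← Measure.map_apply hWm (hTA.inter hTB), hmap, hμAB]
  have hAm : MeasurableSet A := hAeq ▸ hWm hTA
  have hBm : MeasurableSet B := hBeq ▸ hWm hTB
  -- the four cells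
  have hPBc : P Bᶜ = ENNReal.ofReal (1/2) := by
    rw [measure_compl hBm (measure_ne_top _ _), hPB, measure_univ,
      ← ENNReal.ofReal_one, ← ENNReal.ofReal_sub _ (by norm_num)]
    norm_num
  have hPAcB : P (Aᶜ ∩ B) = ENNReal.ofReal (1/2 - q) := by
    have hset : Aᶜ ∩ B = B \ (A ∩ B) := by
      ext ω; simp only [Set.mem_inter_iff, Set.mem_compl_iff, Set.mem_diff]; tauto
    rw [hset, measure_diff Set.inter_subset_right (hAm.inter hBm).nullMeasurableSet
      (measure_ne_top _ _), hPB, hPAB, ← ENNReal.ofReal_sub _ (by linarith)]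
  have hPABc : P (A ∩ Bᶜ) = ENNReal.ofReal (1/2 - q) := by
    have hset : A ∩ Bᶜ = A \ (A ∩ B) := by
      ext ω; simp only [Set.mem_inter_iff, Set.mem_compl_iff, Set.mem_diff]; tauto
    rw [hset, measure_diff Set.inter_subset_left (hAm.inter hBm).nullMeasurableSet
      (measure_ne_top _ _), hPA, hPAB, ← ENNReal.ofReal_sub _ (by linarith)]
  have hPAcBc : P (Aᶜ ∩ Bᶜ) = ENNReal.ofReal q := by
    have hset : Aᶜ ∩ Bᶜ = Bᶜ \ (A ∩ Bᶜ) := by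
      ext ω; simp only [Set.mem_inter_iff, Set.mem_compl_iff, Set.mem_diff]; tauto
    rw [hset, measure_diff Set.inter_subset_right (hAm.inter hBm.compl).nullMeasurableSet
      (measure_ne_top _ _), hPBc, hPABc, ← ENNReal.ofReal_sub _ (by linarith)]
    congr 1
    ring
  -- final computation
  rw [hαt]
  unfold condEntropyInd
  rw [hPB, hPBc, hPAB, hPAcB, hPABc, hPAcBc,
    ENNReal.toReal_ofReal (by norm_num : (0:ℝ) ≤ 1/2),
    ENNReal.toReal_ofReal hq1.le,
    ENNReal.toReal_ofReal (by linarith : (0:ℝ) ≤ 1/2 - q)]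
  have e1 : q / (1/2) = 1/2 + 1/π * α := by
    rw [hqdef]; field_simp; ring
  have e2 : (1/2 - q) / (1/2) = 1/2 - 1/π * α := by
    rw [hqdef]; field_simp; ring
  rw [e1, e2]
  ring
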